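/- Let Σ = diag(εI_{d-k}, I_k) with ε ∈ (0,1), let B* ∈ ℝ^{d×k} be orthogonal with columns in the top (d-k)-coordinate block, and let tasks be θ = (1/√(2ε))B*w + δ with w, δ uniform on unit spheres of ℝ^k and of the bottom-k-coordinate eigenspace E_k respectively. Then for any orthogonal B ∈ ℝ^{d×k}, the expected optimal frozen-representation risk E_{w,δ}[min_v ‖Σ^{1/2}(Bv - θ)‖²] is uniquely minimized over k-dimensional subspaces col(B) by col(B) = E_k, not by col(B*). -/

import Mathlib

open MeasureTheory Matrix
open scoped BigOperators

/-- The weighted squared norm `‖Σ^{1/2}u‖²` for `Σ = diag(ε I_{d−k}, I_k)`. -/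
noncomputable def hardQuad {m k : ℕ} (ε : ℝ) (u : Fin m ⊕ Fin k → ℝ) : ℝ :=
  ε * (∑ a : Fin m, u (Sum.inl a) ^ 2) + ∑ a : Fin k, u (Sum.inr a) ^ 2

/-- The population frozen-representation risk of representation `B`, averaged over
tasks `θ = (1/√(2ε))B*w + δ` with `w, δ` uniform on unit spheres. -/
noncomputable def frozenRisk {m k : ℕ} (ε : ℝ)
    (μw μδ : Measure (Fin k → ℝ))
    (Bstar B : Matrix (Fin m ⊕ Fin k) (Fin k) ℝ) : ℝ :=
  ∫ δc, ∫ w,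
    sInf {r : ℝ | ∃ v : Fin k → ℝ,
      r = hardQuad ε (B.mulVec v -
        ((1 / Real.sqrt (2 * ε)) • Bstar.mulVec w +
          fun i => Sum.elim (fun _ => (0 : ℝ)) δc i))} ∂μw ∂μδ


set_option linter.unusedSectionVars false
set_option maxHeartbeats 1000000


section Helpers
variable {n p : Type*} [Fintype n] [Fintype p] [DecidableEq n]

lemma dot_mulVec_left (A : Matrix p n ℝ) (y : p → ℝ) (x : n → ℝ) :
    y ⬝ᵥ A *ᵥ x = (Aᵀ *ᵥ y) ⬝ᵥ x := by
  rw [Matrix.dotProduct_mulVec, ← Matrix.vecMul_transpose, Matrix.transpose_transpose]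

lemma mulVec_dot_right (A : Matrix p n ℝ) (x : n → ℝ) (y : p → ℝ) :
    (A *ᵥ x) ⬝ᵥ y = x ⬝ᵥ (Aᵀ *ᵥ y) := by
  rw [dotProduct_comm, dot_mulVec_left, dotProduct_comm]

lemma quad_isLeast (M : Matrix n n ℝ) (hM : M.PosDef) (b : n → ℝ) (c0 : ℝ) :
    IsLeast {r : ℝ | ∃ v : n → ℝ, r = M *ᵥ v ⬝ᵥ v - 2 * (b ⬝ᵥ v) + c0}
      (c0 - (M⁻¹ *ᵥ b) ⬝ᵥ b) := by
  have hMt : Mᵀ = M := by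
    have := hM.isHermitian; simpa [Matrix.IsHermitian] using this
  have hMu : M * M⁻¹ = 1 := Matrix.mul_nonsing_inv M hM.det_pos.ne'.isUnit
  set u : n → ℝ := M⁻¹ *ᵥ b with hu
  have hMub : M *ᵥ u = b := by
    rw [hu, Matrix.mulVec_mulVec, hMu, Matrix.one_mulVec]
  have h1 : ∀ v : n → ℝ, M *ᵥ v ⬝ᵥ u = b ⬝ᵥ v := by
    intro v
    rw [mulVec_dot_right, hMt, hMub, dotProduct_comm]
  have key : ∀ v : n → ℝ,
      M *ᵥ v ⬝ᵥ v - 2 * (b ⬝ᵥ v) + c0 - (c0 - u ⬝ᵥ b)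
        = M *ᵥ (v - u) ⬝ᵥ (v - u) := by
    intro v
    have h2 : M *ᵥ (v - u) ⬝ᵥ (v - u)
        = M *ᵥ v ⬝ᵥ v - M *ᵥ v ⬝ᵥ u - (M *ᵥ u ⬝ᵥ v - M *ᵥ u ⬝ᵥ u) := by
      rw [Matrix.mulVec_sub, sub_dotProduct, dotProduct_sub,
        dotProduct_sub]
    rw [h2, hMub, h1 v, dotProduct_comm b u]
    ring
  have hnn : ∀ v : n → ℝ, 0 ≤ M *ᵥ (v - u) ⬝ᵥ (v - u) := by
    intro v
    have := hM.posSemidef.dotProduct_mulVec_nonneg (v - u)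
    simpa [dotProduct_comm] using this
  constructor
  · exact ⟨u, by rw [h1 u, dotProduct_comm u b]; ring⟩
  · rintro r ⟨v, rfl⟩
    have := key v
    have := hnn v
    have hub : u ⬝ᵥ b = (M⁻¹ *ᵥ b) ⬝ᵥ b := rfl
    linarith [key v, hnn v]

lemma trace_transpose_mul_self_nonneg (Z : Matrix p n ℝ) :
    0 ≤ (Zᵀ * Z).trace := by
  rw [Matrix.trace]
  apply Finset.sum_nonneg
  intro j _
  simp only [Matrix.diag_apply, Matrix.mul_apply, Matrix.transpose_apply]
  exact Finset.sum_nonneg fun i _ => mul_self_nonneg _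

lemma trace_transpose_mul_self_eq_zero (Z : Matrix p n ℝ)
    (h : (Zᵀ * Z).trace = 0) : Z = 0 := by
  have hz : ∀ j ∈ Finset.univ, (Zᵀ * Z) j j = 0 := by
    intro j _
    have : ∀ j ∈ (Finset.univ : Finset n), 0 ≤ (Zᵀ * Z) j j := by
      intro j _
      simp only [Matrix.mul_apply, Matrix.transpose_apply]
      exact Finset.sum_nonneg fun i _ => mul_self_nonneg _
    exact (Finset.sum_eq_zero_iff_of_nonneg this).mp h j (Finset.mem_univ j)
  ext i j
  have := hz j (Finset.mem_univ j)
  simp only [Matrix.mul_apply, Matrix.transpose_apply] at this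
  have h0 : ∀ i ∈ (Finset.univ : Finset p), Z i j * Z i j = 0 :=
    (Finset.sum_eq_zero_iff_of_nonneg (fun i _ => mul_self_nonneg _)).mp this
  have := h0 i (Finset.mem_univ i)
  simpa [mul_self_eq_zero] using this

lemma trace_inv_quad (M : Matrix n n ℝ) (hM : M.PosDef) (C : Matrix p n ℝ) :
    0 ≤ (M⁻¹ * (Cᵀ * C)).trace ∧ ((M⁻¹ * (Cᵀ * C)).trace = 0 → C = 0) := by
  have hMi : M⁻¹.PosDef := hM.inv
  obtain ⟨R, hR⟩ : ∃ R : Matrix n n ℝ, M⁻¹ = Rᵀ * R := by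
    open scoped MatrixOrder Matrix.Norms.L2Operator in
    obtain ⟨R, hR⟩ := CStarAlgebra.nonneg_iff_eq_star_mul_self.mp hMi.posSemidef.nonneg
    exact ⟨R, by simpa [Matrix.star_eq_conjTranspose] using hR⟩
  have hdet : IsUnit Rᵀ.det := by
    have h1 : (0:ℝ) < M⁻¹.det := hMi.det_pos
    rw [hR, Matrix.det_mul] at h1
    have : R.det ≠ 0 := by
      intro h; rw [h] at h1; simp at h1
    simpa [Matrix.det_transpose] using this.isUnit
  have htr : (M⁻¹ * (Cᵀ * C)).trace = ((C * Rᵀ)ᵀ * (C * Rᵀ)).trace := by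
    rw [hR, Matrix.transpose_mul, Matrix.transpose_transpose]
    rw [show R * Cᵀ * (C * Rᵀ) = R * (Cᵀ * C * Rᵀ) by simp only [Matrix.mul_assoc]]
    rw [Matrix.trace_mul_comm (R) (Cᵀ * C * Rᵀ)]
    rw [show Cᵀ * C * Rᵀ * R = Cᵀ * C * (Rᵀ * R) by simp only [Matrix.mul_assoc]]
    rw [Matrix.trace_mul_comm]
  constructor
  · rw [htr]; exact trace_transpose_mul_self_nonneg _
  · intro h
    rw [htr] at h
    have hz : C * Rᵀ = 0 := trace_transpose_mul_self_eq_zero _ h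
    have := congrArg (fun X => X * Rᵀ⁻¹) hz
    simpa [Matrix.mul_assoc, Matrix.mul_nonsing_inv _ hdet] using this

end Helpers


section Moments
variable {k : ℕ} {μ : Measure (Fin k → ℝ)} [IsProbabilityMeasure μ]

lemma meas_dot (u : Fin k → ℝ) : Measurable (fun w : Fin k → ℝ => u ⬝ᵥ w) := by
  simp only [dotProduct]
  exact Finset.measurable_sum _ fun i _ => by fun_prop

lemma meas_mulVec {l : ℕ} (O : Matrix (Fin l) (Fin k) ℝ) :
    Measurable (fun w : Fin k → ℝ => O *ᵥ w) :=
  measurable_pi_lambda _ fun i => meas_dot (O i)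

lemma integral_rot (hrot : ∀ O : Matrix (Fin k) (Fin k) ℝ, Oᵀ * O = 1 →
      Measure.map O.mulVec μ = μ)
    (O : Matrix (Fin k) (Fin k) ℝ) (hO : Oᵀ * O = 1)
    (f : (Fin k → ℝ) → ℝ) (hf : Measurable f) :
    ∫ w, f (O *ᵥ w) ∂μ = ∫ w, f w ∂μ := by
  have h := MeasureTheory.integral_map (μ := μ) (meas_mulVec O).aemeasurable
    (f := f) (by rw [hrot O hO]; exact hf.aestronglyMeasurable)
  rw [hrot O hO] at h
  exact h.symm

lemma sphere_coord_bound {w : Fin k → ℝ} (hw : (∑ i, w i ^ 2) = 1) (i : Fin k) :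
    |w i| ≤ 1 := by
  have h1 : w i ^ 2 ≤ 1 := by
    rw [← hw]
    exact Finset.single_le_sum (f := fun i => w i ^ 2) (fun i _ => sq_nonneg _)
      (Finset.mem_univ i)
  nlinarith [abs_nonneg (w i), sq_abs (w i)]

lemma integrable_sphere_bound (hsph : ∀ᵐ w ∂μ, (∑ i, w i ^ 2) = 1)
    {f : (Fin k → ℝ) → ℝ} (hf : Measurable f) (C : ℝ)
    (hb : ∀ w : Fin k → ℝ, (∑ i, w i ^ 2) = 1 → |f w| ≤ C) :
    Integrable f μ := by
  apply (integrable_const C).mono' hf.aestronglyMeasurable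
  filter_upwards [hsph] with w hw
  simpa [Real.norm_eq_abs] using hb w hw

lemma integrable_coord_mul (hsph : ∀ᵐ w ∂μ, (∑ i, w i ^ 2) = 1) (i j : Fin k) :
    Integrable (fun w : Fin k → ℝ => w i * w j) μ := by
  refine integrable_sphere_bound hsph
    ((measurable_pi_apply i).mul (measurable_pi_apply j)) 1 fun w hw => ?_
  rw [abs_mul]
  exact mul_le_one₀ (sphere_coord_bound hw i) (abs_nonneg _) (sphere_coord_bound hw j)

lemma integrable_linform (hsph : ∀ᵐ w ∂μ, (∑ i, w i ^ 2) = 1) (u : Fin k → ℝ) :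
    Integrable (fun w : Fin k → ℝ => u ⬝ᵥ w) μ := by
  refine integrable_sphere_bound hsph (meas_dot u) (∑ i, |u i|) fun w hw => ?_
  calc |u ⬝ᵥ w| ≤ ∑ i, |u i * w i| := Finset.abs_sum_le_sum_abs _ _
  _ ≤ ∑ i, |u i| := by
      refine Finset.sum_le_sum fun i _ => ?_
      rw [abs_mul]
      calc |u i| * |w i| ≤ |u i| * 1 :=
            mul_le_mul_of_nonneg_left (sphere_coord_bound hw i) (abs_nonneg _)
      _ = |u i| := mul_one _

lemma integrable_quadform (hsph : ∀ᵐ w ∂μ, (∑ i, w i ^ 2) = 1)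
    (A : Matrix (Fin k) (Fin k) ℝ) :
    Integrable (fun w : Fin k → ℝ => A *ᵥ w ⬝ᵥ w) μ := by
  refine integrable_sphere_bound hsph ?_ (∑ i, ∑ j, |A i j|) fun w hw => ?_
  · exact Finset.measurable_sum _ fun i _ => (meas_dot (A i)).mul (measurable_pi_apply i)
  · calc |A *ᵥ w ⬝ᵥ w| ≤ ∑ i, |(A *ᵥ w) i * w i| := Finset.abs_sum_le_sum_abs _ _
    _ ≤ ∑ i, ∑ j, |A i j| := by
        refine Finset.sum_le_sum fun i _ => ?_
        calc |(A *ᵥ w) i * w i| ≤ |(A *ᵥ w) i| * 1 := by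
              rw [abs_mul]
              exact mul_le_mul_of_nonneg_left (sphere_coord_bound hw i) (abs_nonneg _)
        _ = |∑ j, A i j * w j| := by rw [mul_one]; rfl
        _ ≤ ∑ j, |A i j * w j| := Finset.abs_sum_le_sum_abs _ _
        _ ≤ ∑ j, |A i j| := by
            refine Finset.sum_le_sum fun j _ => ?_
            rw [abs_mul]
            calc |A i j| * |w j| ≤ |A i j| * 1 :=
                  mul_le_mul_of_nonneg_left (sphere_coord_bound hw j) (abs_nonneg _)
            _ = |A i j| := mul_one _

/-- permutation matrix -/
def permMat (k : ℕ) (σ : Equiv.Perm (Fin k)) : Matrix (Fin k) (Fin k) ℝ :=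
  Matrix.of fun a b => if σ a = b then 1 else 0

lemma permMat_mulVec_apply (σ : Equiv.Perm (Fin k)) (w : Fin k → ℝ) (a : Fin k) :
    (permMat k σ *ᵥ w) a = w (σ a) := by
  simp [permMat, Matrix.mulVec, dotProduct]

lemma permMat_orth (σ : Equiv.Perm (Fin k)) : (permMat k σ)ᵀ * permMat k σ = 1 := by
  ext b c
  simp only [Matrix.mul_apply, Matrix.transpose_apply, permMat, Matrix.of_apply,
    Matrix.one_apply]
  rw [Finset.sum_eq_single (σ.symm b)]
  · simp only [Equiv.apply_symm_apply, if_pos rfl, one_mul]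
    by_cases h : b = c <;> simp [h]
  · intro a _ ha
    have : σ a ≠ b := fun h => ha (by rw [← h]; simp)
    simp [this]
  · intro h; exact absurd (Finset.mem_univ _) h

lemma moment_offdiag (hsph : ∀ᵐ w ∂μ, (∑ i, w i ^ 2) = 1)
    (hrot : ∀ O : Matrix (Fin k) (Fin k) ℝ, Oᵀ * O = 1 →
      Measure.map O.mulVec μ = μ)
    (i j : Fin k) (hij : i ≠ j) : ∫ w, w i * w j ∂μ = 0 := by
  set O := Matrix.diagonal (fun l : Fin k => if l = i then (-1:ℝ) else 1) with hOdef
  have hO : Oᵀ * O = 1 := by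
    rw [hOdef, Matrix.diagonal_transpose, Matrix.diagonal_mul_diagonal]
    have : (fun l : Fin k => (if l = i then (-1:ℝ) else 1) * (if l = i then (-1:ℝ) else 1))
        = fun _ => (1:ℝ) := by
      funext l; by_cases h : l = i <;> simp [h]
    rw [this, Matrix.diagonal_one]
  have h := integral_rot hrot O hO (fun w => w i * w j)
    ((measurable_pi_apply i).mul (measurable_pi_apply j))
  simp only [hOdef, Matrix.mulVec_diagonal, if_pos rfl, if_neg (Ne.symm hij),
    eq_self_iff_true, if_true, one_mul, neg_one_mul, neg_mul] at h
  rw [MeasureTheory.integral_neg] at h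
  linarith

lemma moment_diag (hsph : ∀ᵐ w ∂μ, (∑ i, w i ^ 2) = 1)
    (hrot : ∀ O : Matrix (Fin k) (Fin k) ℝ, Oᵀ * O = 1 →
      Measure.map O.mulVec μ = μ)
    (i : Fin k) : ∫ w, w i * w i ∂μ = 1 / (k:ℝ) := by
  have heq : ∀ j : Fin k, ∫ w, w j * w j ∂μ = ∫ w, w i * w i ∂μ := by
    intro j
    have h := integral_rot hrot (permMat k (Equiv.swap i j)) (permMat_orth _)
      (fun w => w i * w i) ((measurable_pi_apply i).mul (measurable_pi_apply i))
    simp only [permMat_mulVec_apply, Equiv.swap_apply_left] at h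
    exact h
  have hk : 0 < k := i.pos
  have hsum : ∑ j : Fin k, ∫ w, w j * w j ∂μ = 1 := by
    rw [← MeasureTheory.integral_finset_sum _ (fun j _ => integrable_coord_mul hsph j j)]
    calc ∫ w, ∑ j, w j * w j ∂μ = ∫ w, (1:ℝ) ∂μ := by
          refine integral_congr_ae (hsph.mono fun w hw => ?_)
          simpa [sq] using hw
    _ = 1 := by simp
  rw [Finset.sum_congr rfl (fun j _ => heq j), Finset.sum_const, Finset.card_univ,
    Fintype.card_fin, nsmul_eq_mul] at hsum
  field_simp at hsum ⊢
  linarith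

lemma moment (hsph : ∀ᵐ w ∂μ, (∑ i, w i ^ 2) = 1)
    (hrot : ∀ O : Matrix (Fin k) (Fin k) ℝ, Oᵀ * O = 1 →
      Measure.map O.mulVec μ = μ)
    (i j : Fin k) : ∫ w, w i * w j ∂μ = if i = j then 1 / (k:ℝ) else 0 := by
  by_cases h : i = j
  · subst h; simp [moment_diag hsph hrot i]
  · simp [h, moment_offdiag hsph hrot i j h]

lemma integral_linform_zero (hsph : ∀ᵐ w ∂μ, (∑ i, w i ^ 2) = 1)
    (hrot : ∀ O : Matrix (Fin k) (Fin k) ℝ, Oᵀ * O = 1 →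
      Measure.map O.mulVec μ = μ)
    (u : Fin k → ℝ) : ∫ w, u ⬝ᵥ w ∂μ = 0 := by
  have hO : ((-1 : Matrix (Fin k) (Fin k) ℝ))ᵀ * (-1) = 1 := by
    simp [Matrix.transpose_neg, Matrix.transpose_one]
  have h := integral_rot hrot (-1) hO (fun w => u ⬝ᵥ w) (meas_dot u)
  simp only [Matrix.neg_mulVec, Matrix.one_mulVec, dotProduct_neg] at h
  rw [MeasureTheory.integral_neg] at h
  linarith

lemma integral_quadform_eq (hsph : ∀ᵐ w ∂μ, (∑ i, w i ^ 2) = 1)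
    (hrot : ∀ O : Matrix (Fin k) (Fin k) ℝ, Oᵀ * O = 1 →
      Measure.map O.mulVec μ = μ)
    (A : Matrix (Fin k) (Fin k) ℝ) :
    ∫ w, A *ᵥ w ⬝ᵥ w ∂μ = A.trace / (k:ℝ) := by
  have h1 : ∀ w : Fin k → ℝ, A *ᵥ w ⬝ᵥ w = ∑ i, ∑ j, A i j * (w j * w i) := by
    intro w
    simp only [Matrix.mulVec, dotProduct, Finset.sum_mul, mul_assoc]
  simp only [h1]
  refine (MeasureTheory.integral_finset_sum _ (fun i _ =>
    integrable_finset_sum _ (fun j _ => (integrable_coord_mul hsph j i).const_mul _))).trans ?_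
  have h2 : ∀ i, ∫ w, ∑ j, A i j * (w j * w i) ∂μ = ∑ j, A i j * (if j = i then 1/(k:ℝ) else 0) := by
    intro i
    rw [MeasureTheory.integral_finset_sum _ (fun j _ =>
      (integrable_coord_mul hsph j i).const_mul _)]
    exact Finset.sum_congr rfl fun j _ => by
      rw [MeasureTheory.integral_const_mul, moment hsph hrot j i]
  simp only [h2, mul_ite, mul_zero, Finset.sum_ite_eq', Finset.mem_univ, if_pos]
  rw [Matrix.trace, Finset.sum_div]
  exact Finset.sum_congr rfl fun i _ => by rw [Matrix.diag_apply, mul_one_div]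

end Moments

section Setup
variable {m k : ℕ}

noncomputable def Dmat (m k : ℕ) (ε : ℝ) : Matrix (Fin m ⊕ Fin k) (Fin m ⊕ Fin k) ℝ :=
  Matrix.diagonal (Sum.elim (fun _ => ε) fun _ => 1)

noncomputable def Nmat (m k : ℕ) (ε : ℝ) (B : Matrix (Fin m ⊕ Fin k) (Fin k) ℝ) :
    Matrix (Fin m ⊕ Fin k) (Fin m ⊕ Fin k) ℝ :=
  Dmat m k ε - Dmat m k ε * B * (Bᵀ * Dmat m k ε * B)⁻¹ * (Bᵀ * Dmat m k ε)

lemma Dmat_transpose (ε : ℝ) : (Dmat m k ε)ᵀ = Dmat m k ε :=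
  Matrix.diagonal_transpose _

lemma hardQuad_eq_quad (ε : ℝ) (u : Fin m ⊕ Fin k → ℝ) :
    hardQuad ε u = Dmat m k ε *ᵥ u ⬝ᵥ u := by
  simp only [hardQuad, Dmat, dotProduct, Matrix.mulVec_diagonal]
  rw [Fintype.sum_sum_type]
  simp only [Sum.elim_inl, Sum.elim_inr, one_mul, Finset.mul_sum]
  congr 1
  · exact Finset.sum_congr rfl fun a _ => by ring
  · exact Finset.sum_congr rfl fun a _ => by ring

lemma Dmat_quad_ge {ε : ℝ} (hε : ε ∈ Set.Ioo (0:ℝ) 1) (x : Fin m ⊕ Fin k → ℝ) :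
    ε * (x ⬝ᵥ x) ≤ Dmat m k ε *ᵥ x ⬝ᵥ x := by
  simp only [Dmat, dotProduct, Matrix.mulVec_diagonal]
  rw [Finset.mul_sum]
  refine Finset.sum_le_sum fun i _ => ?_
  rcases i with a | a
  · simp only [Sum.elim_inl]
    rw [mul_assoc]
  · simp only [Sum.elim_inr, one_mul]
    nlinarith [mul_self_nonneg (x (Sum.inr a)), hε.2]

lemma M_transpose (ε : ℝ) (B : Matrix (Fin m ⊕ Fin k) (Fin k) ℝ) :
    (Bᵀ * Dmat m k ε * B)ᵀ = Bᵀ * Dmat m k ε * B := by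
  rw [Matrix.transpose_mul, Matrix.transpose_mul, Dmat_transpose,
    Matrix.transpose_transpose, Matrix.mul_assoc]

lemma M_posDef {ε : ℝ} (hε : ε ∈ Set.Ioo (0:ℝ) 1)
    (B : Matrix (Fin m ⊕ Fin k) (Fin k) ℝ) (hB : Bᵀ * B = 1) :
    (Bᵀ * Dmat m k ε * B).PosDef := by
  refine Matrix.PosDef.of_dotProduct_mulVec_pos ?_ ?_
  · show (Bᵀ * Dmat m k ε * B)ᴴ = _
    have h : (Bᵀ * Dmat m k ε * B)ᴴ = (Bᵀ * Dmat m k ε * B)ᵀ := by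
      ext i j; simp [Matrix.conjTranspose_apply]
    rw [h, M_transpose]
  · intro x hx
    have hsx : star x = x := by simp
    rw [hsx]
    have h1 : (Bᵀ * Dmat m k ε * B) *ᵥ x = Bᵀ *ᵥ (Dmat m k ε *ᵥ (B *ᵥ x)) := by
      rw [Matrix.mulVec_mulVec, Matrix.mulVec_mulVec, Matrix.mul_assoc]
    have h2 : x ⬝ᵥ (Bᵀ *ᵥ (Dmat m k ε *ᵥ (B *ᵥ x)))
        = Dmat m k ε *ᵥ (B *ᵥ x) ⬝ᵥ (B *ᵥ x) := by
      rw [dot_mulVec_left Bᵀ x, Matrix.transpose_transpose, dotProduct_comm]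
    have h3 : (B *ᵥ x) ⬝ᵥ (B *ᵥ x) = x ⬝ᵥ x := by
      rw [mulVec_dot_right B x, Matrix.mulVec_mulVec, hB, Matrix.one_mulVec]
    have h4 : 0 < x ⬝ᵥ x := by
      have hne : x ⬝ᵥ x ≠ 0 := fun h => hx (dotProduct_self_eq_zero.mp h)
      have hge : 0 ≤ x ⬝ᵥ x := Finset.sum_nonneg fun i _ => mul_self_nonneg _
      exact lt_of_le_of_ne hge (Ne.symm hne)
    have h5 := Dmat_quad_ge hε (B *ᵥ x)
    rw [h1, h2]
    rw [h3] at h5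
    nlinarith [hε.1]

lemma Nmat_transpose {ε : ℝ} (B : Matrix (Fin m ⊕ Fin k) (Fin k) ℝ) :
    (Nmat m k ε B)ᵀ = Nmat m k ε B := by
  unfold Nmat
  rw [Matrix.transpose_sub, Matrix.transpose_mul, Matrix.transpose_mul,
    Matrix.transpose_mul, Matrix.transpose_mul, Dmat_transpose,
    Matrix.transpose_transpose, Matrix.transpose_nonsing_inv, M_transpose]
  simp only [Matrix.mul_assoc]

lemma sInf_formula {ε : ℝ} (hε : ε ∈ Set.Ioo (0:ℝ) 1)
    (B : Matrix (Fin m ⊕ Fin k) (Fin k) ℝ) (hB : Bᵀ * B = 1)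
    (θ : Fin m ⊕ Fin k → ℝ) :
    sInf {r : ℝ | ∃ v : Fin k → ℝ, r = hardQuad ε (B *ᵥ v - θ)}
      = Nmat m k ε B *ᵥ θ ⬝ᵥ θ := by
  have hMpd : (Bᵀ * Dmat m k ε * B).PosDef := M_posDef hε B hB
  set D := Dmat m k ε with hD
  set M := Bᵀ * D * B with hM
  set b : Fin k → ℝ := Bᵀ *ᵥ (D *ᵥ θ) with hb
  have hDBt : (D * B)ᵀ = Bᵀ * D := by
    rw [Matrix.transpose_mul, Dmat_transpose]
  have hval : ∀ v : Fin k → ℝ, hardQuad ε (B *ᵥ v - θ)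
      = M *ᵥ v ⬝ᵥ v - 2 * (b ⬝ᵥ v) + (D *ᵥ θ ⬝ᵥ θ) := by
    intro v
    rw [hardQuad_eq_quad, ← hD]
    rw [Matrix.mulVec_sub, sub_dotProduct, dotProduct_sub,
      dotProduct_sub]
    have e1 : D *ᵥ (B *ᵥ v) ⬝ᵥ (B *ᵥ v) = M *ᵥ v ⬝ᵥ v := by
      rw [Matrix.mulVec_mulVec, mulVec_dot_right, hDBt, Matrix.mulVec_mulVec,
        ← hM, dotProduct_comm]
    have e2 : D *ᵥ (B *ᵥ v) ⬝ᵥ θ = b ⬝ᵥ v := by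
      rw [Matrix.mulVec_mulVec, mulVec_dot_right, hDBt, ← Matrix.mulVec_mulVec,
        ← hb, dotProduct_comm]
    have e3 : (D *ᵥ θ) ⬝ᵥ (B *ᵥ v) = b ⬝ᵥ v := by
      rw [dot_mulVec_left, ← hb]
    rw [e1, e2, e3]
    ring
  have hset : {r : ℝ | ∃ v : Fin k → ℝ, r = hardQuad ε (B *ᵥ v - θ)}
      = {r : ℝ | ∃ v : Fin k → ℝ, r = M *ᵥ v ⬝ᵥ v - 2 * (b ⬝ᵥ v) + (D *ᵥ θ ⬝ᵥ θ)} := by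
    ext r
    simp only [Set.mem_setOf_eq, hval]
  rw [hset, (quad_isLeast M hMpd b _).csInf_eq]
  have h1 : (D * B * M⁻¹ * (Bᵀ * D)) *ᵥ θ = (D * B) *ᵥ (M⁻¹ *ᵥ b) := by
    simp only [hb, ← Matrix.mulVec_mulVec]
  have e4 : (D * B * M⁻¹ * (Bᵀ * D)) *ᵥ θ ⬝ᵥ θ = (M⁻¹ *ᵥ b) ⬝ᵥ b := by
    rw [h1, mulVec_dot_right, hDBt, ← Matrix.mulVec_mulVec, ← hb]
  unfold Nmat
  rw [← hD, ← hM, Matrix.sub_mulVec, sub_dotProduct, e4]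

lemma frozenRisk_formula {μw μδ : Measure (Fin k → ℝ)}
    [IsProbabilityMeasure μw] [IsProbabilityMeasure μδ]
    {ε : ℝ} (hε : ε ∈ Set.Ioo (0:ℝ) 1)
    (hwsph : ∀ᵐ w ∂μw, (∑ i, w i ^ 2) = 1)
    (hδsph : ∀ᵐ δc ∂μδ, (∑ i, δc i ^ 2) = 1)
    (hwrot : ∀ O : Matrix (Fin k) (Fin k) ℝ, Oᵀ * O = 1 →
      Measure.map O.mulVec μw = μw)
    (hδrot : ∀ O : Matrix (Fin k) (Fin k) ℝ, Oᵀ * O = 1 →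
      Measure.map O.mulVec μδ = μδ)
    (Bstar : Matrix (Fin m ⊕ Fin k) (Fin k) ℝ)
    (Bk : Matrix (Fin m ⊕ Fin k) (Fin k) ℝ)
    (hBk : Bk = Matrix.of fun i j =>
      Sum.elim (fun _ => (0 : ℝ)) (fun a => if a = j then (1 : ℝ) else 0) i)
    (B : Matrix (Fin m ⊕ Fin k) (Fin k) ℝ) (hB : Bᵀ * B = 1) :
    frozenRisk ε μw μδ Bstar B =
      ((1/(2*ε)) * (Bstarᵀ * (Nmat m k ε B * Bstar)).trace
        + (Bkᵀ * (Nmat m k ε B * Bk)).trace) / k := by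
  set N := Nmat m k ε B with hN
  set c : ℝ := 1 / Real.sqrt (2*ε) with hc
  have hNt : Nᵀ = N := Nmat_transpose B
  have hBkv : ∀ δc : Fin k → ℝ,
      (fun i => Sum.elim (fun _ => (0:ℝ)) δc i) = Bk *ᵥ δc := by
    intro δc
    funext i
    cases i with
    | inl a => simp [hBk, Matrix.mulVec, dotProduct]
    | inr a => simp [hBk, Matrix.mulVec, dotProduct, ite_mul, Finset.sum_ite_eq]
  set A1 := Bstarᵀ * (N * Bstar) with hA1
  set A2 := Bkᵀ * (N * Bk) with hA2
  have h0 : frozenRisk ε μw μδ Bstar B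
      = ∫ δc, ∫ w, N *ᵥ (c • (Bstar *ᵥ w) + Bk *ᵥ δc)
          ⬝ᵥ (c • (Bstar *ᵥ w) + Bk *ᵥ δc) ∂μw ∂μδ := by
    unfold frozenRisk
    refine integral_congr_ae (ae_of_all _ fun δc => ?_)
    refine integral_congr_ae (ae_of_all _ fun w => ?_)
    rw [hBkv δc]
    exact sInf_formula hε B hB _
  have hexp : ∀ (δc w : Fin k → ℝ),
      N *ᵥ (c • (Bstar *ᵥ w) + Bk *ᵥ δc) ⬝ᵥ (c • (Bstar *ᵥ w) + Bk *ᵥ δc)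
        = c^2 * (A1 *ᵥ w ⬝ᵥ w)
          + (2*c) * ((Bstarᵀ *ᵥ (N *ᵥ (Bk *ᵥ δc))) ⬝ᵥ w)
          + A2 *ᵥ δc ⬝ᵥ δc := by
    intro δc w
    have h1 : N *ᵥ (c • (Bstar *ᵥ w) + Bk *ᵥ δc)
        = c • (N *ᵥ (Bstar *ᵥ w)) + N *ᵥ (Bk *ᵥ δc) := by
      rw [Matrix.mulVec_add, Matrix.mulVec_smul]
    have e1 : N *ᵥ (Bstar *ᵥ w) ⬝ᵥ (Bstar *ᵥ w) = A1 *ᵥ w ⬝ᵥ w := by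
      rw [Matrix.mulVec_mulVec, dot_mulVec_left, Matrix.mulVec_mulVec, hA1]
    have e2 : N *ᵥ (Bstar *ᵥ w) ⬝ᵥ (Bk *ᵥ δc)
        = (Bstarᵀ *ᵥ (N *ᵥ (Bk *ᵥ δc))) ⬝ᵥ w := by
      rw [mulVec_dot_right N, hNt, mulVec_dot_right Bstar, dotProduct_comm]
    have e3 : N *ᵥ (Bk *ᵥ δc) ⬝ᵥ (Bstar *ᵥ w)
        = (Bstarᵀ *ᵥ (N *ᵥ (Bk *ᵥ δc))) ⬝ᵥ w := dot_mulVec_left Bstar _ w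
    have e4 : N *ᵥ (Bk *ᵥ δc) ⬝ᵥ (Bk *ᵥ δc) = A2 *ᵥ δc ⬝ᵥ δc := by
      rw [Matrix.mulVec_mulVec, dot_mulVec_left, Matrix.mulVec_mulVec, hA2]
    rw [h1, add_dotProduct, dotProduct_add, dotProduct_add,
      smul_dotProduct, smul_dotProduct, dotProduct_smul,
      dotProduct_smul, e1, e2, e3, e4]
    simp only [smul_eq_mul]
    ring
  have hint1 : Integrable (fun w : Fin k → ℝ => c^2 * (A1 *ᵥ w ⬝ᵥ w)) μw :=
    (integrable_quadform hwsph A1).const_mul _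
  have hint2 : ∀ δc : Fin k → ℝ, Integrable
      (fun w : Fin k → ℝ => (2*c) * ((Bstarᵀ *ᵥ (N *ᵥ (Bk *ᵥ δc))) ⬝ᵥ w)) μw :=
    fun δc => (integrable_linform hwsph _).const_mul _
  have h1 : ∀ δc : Fin k → ℝ,
      (∫ w, N *ᵥ (c • (Bstar *ᵥ w) + Bk *ᵥ δc) ⬝ᵥ (c • (Bstar *ᵥ w) + Bk *ᵥ δc) ∂μw)
        = c^2 * (A1.trace / k) + A2 *ᵥ δc ⬝ᵥ δc := by
    intro δc
    rw [integral_congr_ae (ae_of_all _ (hexp δc))]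
    have hint12 : Integrable (fun w : Fin k → ℝ => c^2 * (A1 *ᵥ w ⬝ᵥ w)
        + (2*c) * ((Bstarᵀ *ᵥ (N *ᵥ (Bk *ᵥ δc))) ⬝ᵥ w)) μw := hint1.add (hint2 δc)
    rw [integral_add hint12 (integrable_const _),
      integral_add hint1 (hint2 δc),
      MeasureTheory.integral_const_mul, MeasureTheory.integral_const_mul,
      integral_quadform_eq hwsph hwrot A1,
      integral_linform_zero hwsph hwrot _, integral_const]
    simp
  rw [h0, integral_congr_ae (ae_of_all _ h1),
    integral_add (integrable_const _) (integrable_quadform hδsph A2),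
    integral_const, integral_quadform_eq hδsph hδrot A2]
  have hc2 : c^2 = 1/(2*ε) := by
    rw [hc, div_pow, one_pow, Real.sq_sqrt (by linarith [hε.1])]
  rw [hc2]
  simp only [measure_univ, ENNReal.toReal_one, probReal_univ, one_smul, smul_eq_mul]
  ring


section Blocks
variable {m k : ℕ}

lemma Bk_mul {n : Type*} [Fintype n] {Bk : Matrix (Fin m ⊕ Fin k) (Fin k) ℝ}
    (hBk : Bk = Matrix.of fun i j =>
      Sum.elim (fun _ => (0 : ℝ)) (fun a => if a = j then (1 : ℝ) else 0) i)
    (Y : Matrix (Fin k) n ℝ) :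
    Bk * Y = Matrix.of fun i j => Sum.elim (fun _ : Fin m => (0:ℝ)) (fun b => Y b j) i := by
  ext i j
  cases i with
  | inl a => simp [Matrix.mul_apply, hBk]
  | inr b => simp [Matrix.mul_apply, hBk, ite_mul, Finset.sum_ite_eq]

lemma BkT_mul {n : Type*} [Fintype n] {Bk : Matrix (Fin m ⊕ Fin k) (Fin k) ℝ}
    (hBk : Bk = Matrix.of fun i j =>
      Sum.elim (fun _ => (0 : ℝ)) (fun a => if a = j then (1 : ℝ) else 0) i)
    (X : Matrix (Fin m ⊕ Fin k) n ℝ) :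
    Bkᵀ * X = Matrix.of fun t j => X (Sum.inr t) j := by
  ext t j
  simp only [Matrix.mul_apply, Matrix.transpose_apply, hBk, Matrix.of_apply]
  rw [Fintype.sum_sum_type]
  simp [ite_mul, Finset.sum_ite_eq']

lemma Bk_orthonormal {Bk : Matrix (Fin m ⊕ Fin k) (Fin k) ℝ}
    (hBk : Bk = Matrix.of fun i j =>
      Sum.elim (fun _ => (0 : ℝ)) (fun a => if a = j then (1 : ℝ) else 0) i) :
    Bkᵀ * Bk = 1 := by
  rw [BkT_mul hBk Bk]
  ext t j
  simp [hBk, Matrix.one_apply]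

lemma Bstar_T_mul_Bk {Bstar Bk : Matrix (Fin m ⊕ Fin k) (Fin k) ℝ}
    (hBstarE : ∀ (a : Fin k) (j : Fin k), Bstar (Sum.inr a) j = 0)
    (hBk : Bk = Matrix.of fun i j =>
      Sum.elim (fun _ => (0 : ℝ)) (fun a => if a = j then (1 : ℝ) else 0) i) :
    Bstarᵀ * Bk = 0 := by
  ext j j'
  simp only [Matrix.mul_apply, Matrix.transpose_apply, hBk, Matrix.of_apply,
    Matrix.zero_apply]
  rw [Fintype.sum_sum_type]
  simp [hBstarE]

lemma D_mul_Bstar {ε : ℝ} {Bstar : Matrix (Fin m ⊕ Fin k) (Fin k) ℝ}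
    (hBstarE : ∀ (a : Fin k) (j : Fin k), Bstar (Sum.inr a) j = 0) :
    Dmat m k ε * Bstar = ε • Bstar := by
  ext i j
  cases i with
  | inl a => simp [Dmat, Matrix.diagonal_mul]
  | inr a => simp [Dmat, Matrix.diagonal_mul, hBstarE]

lemma D_mul_Bk {ε : ℝ} {Bk : Matrix (Fin m ⊕ Fin k) (Fin k) ℝ}
    (hBk : Bk = Matrix.of fun i j =>
      Sum.elim (fun _ => (0 : ℝ)) (fun a => if a = j then (1 : ℝ) else 0) i) :
    Dmat m k ε * Bk = Bk := by
  ext i j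
  cases i with
  | inl a => simp [Dmat, Matrix.diagonal_mul, hBk]
  | inr a => simp [Dmat, Matrix.diagonal_mul, hBk]

lemma D_decomp {ε : ℝ} {Bk : Matrix (Fin m ⊕ Fin k) (Fin k) ℝ}
    (hBk : Bk = Matrix.of fun i j =>
      Sum.elim (fun _ => (0 : ℝ)) (fun a => if a = j then (1 : ℝ) else 0) i) :
    Dmat m k ε = ε • (1 - Bk * Bkᵀ) + Bk * Bkᵀ := by
  have hPb : Bk * Bkᵀ = Matrix.of fun i i' =>
      Sum.elim (fun _ : Fin m => (0:ℝ)) (fun b => Bk i' b) i := Bk_mul hBk Bkᵀ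
  ext i i'
  simp only [Matrix.add_apply, Matrix.smul_apply, Matrix.sub_apply, Matrix.one_apply, hPb,
    Dmat, Matrix.diagonal_apply, Matrix.of_apply, smul_eq_mul]
  cases i with
  | inl a =>
    cases i' with
    | inl a' => by_cases h : a = a' <;> simp [h, hBk]
    | inr b' => simp [hBk]
  | inr b =>
    cases i' with
    | inl a' => simp [hBk]
    | inr b' => by_cases h : b = b' <;> simp [h, hBk, eq_comm]

lemma Ptop_mul {n : Type*} [Fintype n] {Bk : Matrix (Fin m ⊕ Fin k) (Fin k) ℝ}
    (hBk : Bk = Matrix.of fun i j =>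
      Sum.elim (fun _ => (0 : ℝ)) (fun a => if a = j then (1 : ℝ) else 0) i)
    (X : Matrix (Fin m ⊕ Fin k) n ℝ) :
    (1 - Bk * Bkᵀ) * X = Matrix.of fun i j =>
      Sum.elim (fun a => X (Sum.inl a) j) (fun _ => (0:ℝ)) i := by
  rw [Matrix.sub_mul, Matrix.one_mul, Matrix.mul_assoc, BkT_mul hBk X, Bk_mul hBk _]
  ext i j
  cases i with
  | inl a => simp
  | inr b => simp

end Blocks


section TraceFormula
variable {m k : ℕ}

lemma trace_formula {ε : ℝ} (hε : ε ∈ Set.Ioo (0:ℝ) 1)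
    (Bstar : Matrix (Fin m ⊕ Fin k) (Fin k) ℝ)
    (hBstar : Bstarᵀ * Bstar = 1)
    (hBstarE : ∀ (a : Fin k) (j : Fin k), Bstar (Sum.inr a) j = 0)
    (Bk : Matrix (Fin m ⊕ Fin k) (Fin k) ℝ)
    (hBk : Bk = Matrix.of fun i j =>
      Sum.elim (fun _ => (0 : ℝ)) (fun a => if a = j then (1 : ℝ) else 0) i)
    (B : Matrix (Fin m ⊕ Fin k) (Fin k) ℝ) (hB : Bᵀ * B = 1) :
    (1/(2*ε)) * (Bstarᵀ * (Nmat m k ε B * Bstar)).trace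
      + (Bkᵀ * (Nmat m k ε B * Bk)).trace
    = (k:ℝ)/2 + (ε/2) *
        (((Bᵀ * Dmat m k ε * B)⁻¹ *
            (((1 - Bstar * Bstarᵀ) * ((1 - Bk * Bkᵀ) * B))ᵀ *
              ((1 - Bstar * Bstarᵀ) * ((1 - Bk * Bkᵀ) * B)))).trace
          + ((Bᵀ * Dmat m k ε * B)⁻¹ *
              (((1 - Bk * Bkᵀ) * B)ᵀ * ((1 - Bk * Bkᵀ) * B))).trace) := by
  have hεne : ε ≠ 0 := ne_of_gt hε.1
  have hMpd : (Bᵀ * Dmat m k ε * B).PosDef := M_posDef hε B hB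
  have hMinv : (Bᵀ * Dmat m k ε * B)⁻¹ * (Bᵀ * Dmat m k ε * B) = 1 :=
    Matrix.nonsing_inv_mul _ hMpd.det_pos.ne'.isUnit
  have hDBs : Dmat m k ε * Bstar = ε • Bstar := D_mul_Bstar hBstarE
  have hDBk : Dmat m k ε * Bk = Bk := D_mul_Bk hBk
  have hBkBk : Bkᵀ * Bk = 1 := Bk_orthonormal hBk
  have hBsBk : Bstarᵀ * Bk = 0 := Bstar_T_mul_Bk hBstarE hBk
  have hBkBs : Bkᵀ * Bstar = 0 := by
    have := congrArg Matrix.transpose hBsBk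
    simpa [Matrix.transpose_mul] using this
  have hBsTD : Bstarᵀ * Dmat m k ε = ε • Bstarᵀ := by
    have := congrArg Matrix.transpose hDBs
    simpa [Matrix.transpose_mul, Matrix.transpose_smul, Dmat_transpose] using this
  have hBkTD : Bkᵀ * Dmat m k ε = Bkᵀ := by
    have := congrArg Matrix.transpose hDBk
    simpa [Matrix.transpose_mul, Dmat_transpose] using this
  -- trace of first block
  have hA1 : (Bstarᵀ * (Nmat m k ε B * Bstar)).trace
      = ε * k - (ε*ε) *
          ((Bᵀ * Dmat m k ε * B)⁻¹ * (Bᵀ * (Bstar * (Bstarᵀ * B)))).trace := by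
    have e : Bstarᵀ * (Nmat m k ε B * Bstar)
        = ε • (1 : Matrix (Fin k) (Fin k) ℝ)
          - (ε*ε) • (Bstarᵀ * (B * ((Bᵀ * Dmat m k ε * B)⁻¹ * (Bᵀ * Bstar)))) := by
      unfold Nmat
      rw [Matrix.sub_mul, Matrix.mul_sub]
      congr 1
      · rw [hDBs, Matrix.mul_smul, hBstar]
      · calc Bstarᵀ * (Dmat m k ε * B * (Bᵀ * Dmat m k ε * B)⁻¹ * (Bᵀ * Dmat m k ε) * Bstar)
            = (Bstarᵀ * Dmat m k ε) * (B * ((Bᵀ * Dmat m k ε * B)⁻¹ * (Bᵀ * (Dmat m k ε * Bstar)))) := by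
              simp only [Matrix.mul_assoc]
        _ = (ε • Bstarᵀ) * (B * ((Bᵀ * Dmat m k ε * B)⁻¹ * (Bᵀ * (ε • Bstar)))) := by
              rw [hBsTD, hDBs]
        _ = (ε*ε) • (Bstarᵀ * (B * ((Bᵀ * Dmat m k ε * B)⁻¹ * (Bᵀ * Bstar)))) := by
              simp only [Matrix.mul_smul, Matrix.smul_mul, smul_smul]
    rw [e, Matrix.trace_sub, Matrix.trace_smul, Matrix.trace_smul, Matrix.trace_one]
    have ecyc : (Bstarᵀ * (B * ((Bᵀ * Dmat m k ε * B)⁻¹ * (Bᵀ * Bstar)))).trace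
        = ((Bᵀ * Dmat m k ε * B)⁻¹ * (Bᵀ * (Bstar * (Bstarᵀ * B)))).trace := by
      rw [Matrix.trace_mul_comm]
      rw [show B * ((Bᵀ * Dmat m k ε * B)⁻¹ * (Bᵀ * Bstar)) * Bstarᵀ
          = B * ((Bᵀ * Dmat m k ε * B)⁻¹ * (Bᵀ * (Bstar * Bstarᵀ))) from by
        simp only [Matrix.mul_assoc]]
      rw [Matrix.trace_mul_comm]
      simp only [Matrix.mul_assoc]
    rw [ecyc]
    simp only [smul_eq_mul, Fintype.card_fin]
  -- trace of second block
  have hA2 : (Bkᵀ * (Nmat m k ε B * Bk)).trace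
      = (k:ℝ) - ((Bᵀ * Dmat m k ε * B)⁻¹ * (Bᵀ * (Bk * (Bkᵀ * B)))).trace := by
    have e : Bkᵀ * (Nmat m k ε B * Bk)
        = (1 : Matrix (Fin k) (Fin k) ℝ)
          - Bkᵀ * (B * ((Bᵀ * Dmat m k ε * B)⁻¹ * (Bᵀ * Bk))) := by
      unfold Nmat
      rw [Matrix.sub_mul, Matrix.mul_sub]
      congr 1
      · rw [hDBk, hBkBk]
      · calc Bkᵀ * (Dmat m k ε * B * (Bᵀ * Dmat m k ε * B)⁻¹ * (Bᵀ * Dmat m k ε) * Bk)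
            = (Bkᵀ * Dmat m k ε) * (B * ((Bᵀ * Dmat m k ε * B)⁻¹ * (Bᵀ * (Dmat m k ε * Bk)))) := by
              simp only [Matrix.mul_assoc]
        _ = Bkᵀ * (B * ((Bᵀ * Dmat m k ε * B)⁻¹ * (Bᵀ * Bk))) := by
              rw [hBkTD, hDBk]
    rw [e, Matrix.trace_sub, Matrix.trace_one]
    have ecyc : (Bkᵀ * (B * ((Bᵀ * Dmat m k ε * B)⁻¹ * (Bᵀ * Bk)))).trace
        = ((Bᵀ * Dmat m k ε * B)⁻¹ * (Bᵀ * (Bk * (Bkᵀ * B)))).trace := by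
      rw [Matrix.trace_mul_comm]
      rw [show B * ((Bᵀ * Dmat m k ε * B)⁻¹ * (Bᵀ * Bk)) * Bkᵀ
          = B * ((Bᵀ * Dmat m k ε * B)⁻¹ * (Bᵀ * (Bk * Bkᵀ))) from by
        simp only [Matrix.mul_assoc]]
      rw [Matrix.trace_mul_comm]
      simp only [Matrix.mul_assoc, Fintype.card_fin]
    rw [ecyc]
    simp only [Fintype.card_fin]
  -- idempotents and annihilations
  have hQQ : Bstar * Bstarᵀ * (Bstar * Bstarᵀ) = Bstar * Bstarᵀ := by
    calc Bstar * Bstarᵀ * (Bstar * Bstarᵀ) = Bstar * ((Bstarᵀ * Bstar) * Bstarᵀ) := by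
          simp only [Matrix.mul_assoc]
    _ = Bstar * Bstarᵀ := by rw [hBstar, Matrix.one_mul]
  have hPbPb : Bk * Bkᵀ * (Bk * Bkᵀ) = Bk * Bkᵀ := by
    calc Bk * Bkᵀ * (Bk * Bkᵀ) = Bk * ((Bkᵀ * Bk) * Bkᵀ) := by
          simp only [Matrix.mul_assoc]
    _ = Bk * Bkᵀ := by rw [hBkBk, Matrix.one_mul]
  have hPbQ : Bk * Bkᵀ * (Bstar * Bstarᵀ) = 0 := by
    calc Bk * Bkᵀ * (Bstar * Bstarᵀ) = Bk * ((Bkᵀ * Bstar) * Bstarᵀ) := by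
          simp only [Matrix.mul_assoc]
    _ = 0 := by rw [hBkBs, Matrix.zero_mul, Matrix.mul_zero]
  have hQPb : Bstar * Bstarᵀ * (Bk * Bkᵀ) = 0 := by
    calc Bstar * Bstarᵀ * (Bk * Bkᵀ) = Bstar * ((Bstarᵀ * Bk) * Bkᵀ) := by
          simp only [Matrix.mul_assoc]
    _ = 0 := by rw [hBsBk, Matrix.zero_mul, Matrix.mul_zero]
  have hPtT : (1 - Bk * Bkᵀ)ᵀ = 1 - Bk * Bkᵀ := by
    rw [Matrix.transpose_sub, Matrix.transpose_one, Matrix.transpose_mul,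
      Matrix.transpose_transpose]
  have hQT : (1 - Bstar * Bstarᵀ)ᵀ = 1 - Bstar * Bstarᵀ := by
    rw [Matrix.transpose_sub, Matrix.transpose_one, Matrix.transpose_mul,
      Matrix.transpose_transpose]
  have hPtPt : (1 - Bk * Bkᵀ) * (1 - Bk * Bkᵀ) = 1 - Bk * Bkᵀ := by
    rw [Matrix.sub_mul, Matrix.one_mul, Matrix.mul_sub, Matrix.mul_one, hPbPb,
      sub_self, sub_zero]
  have hQtQt : (1 - Bstar * Bstarᵀ) * (1 - Bstar * Bstarᵀ) = 1 - Bstar * Bstarᵀ := by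
    rw [Matrix.sub_mul, Matrix.one_mul, Matrix.mul_sub, Matrix.mul_one, hQQ,
      sub_self, sub_zero]
  -- the conjugated matrices
  have hC2 : ((1 - Bk * Bkᵀ) * B)ᵀ * ((1 - Bk * Bkᵀ) * B)
      = Bᵀ * ((1 - Bk * Bkᵀ) * B) := by
    rw [Matrix.transpose_mul, hPtT, Matrix.mul_assoc]
    rw [show (1 - Bk * Bkᵀ) * ((1 - Bk * Bkᵀ) * B) = ((1 - Bk * Bkᵀ) * (1 - Bk * Bkᵀ)) * B from by
      simp only [Matrix.mul_assoc]]
    rw [hPtPt]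
  have hC1 : ((1 - Bstar * Bstarᵀ) * ((1 - Bk * Bkᵀ) * B))ᵀ
        * ((1 - Bstar * Bstarᵀ) * ((1 - Bk * Bkᵀ) * B))
      = Bᵀ * ((1 - Bk * Bkᵀ) * B) - Bᵀ * (Bstar * (Bstarᵀ * B)) := by
    have step1 : (1 - Bstar * Bstarᵀ) * ((1 - Bk * Bkᵀ) * B)
        = (1 - Bk * Bkᵀ) * B - Bstar * (Bstarᵀ * B) := by
      rw [Matrix.sub_mul, Matrix.one_mul]
      congr 1
      calc Bstar * Bstarᵀ * ((1 - Bk * Bkᵀ) * B)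
          = (Bstar * Bstarᵀ * (1 - Bk * Bkᵀ)) * B := by simp only [Matrix.mul_assoc]
      _ = (Bstar * Bstarᵀ) * B := by
            rw [Matrix.mul_sub, Matrix.mul_one, hQPb, sub_zero]
      _ = Bstar * (Bstarᵀ * B) := by simp only [Matrix.mul_assoc]
    have step2 : (1 - Bk * Bkᵀ) * (Bstar * (Bstarᵀ * B)) = Bstar * (Bstarᵀ * B) := by
      rw [Matrix.sub_mul, Matrix.one_mul]
      rw [show Bk * Bkᵀ * (Bstar * (Bstarᵀ * B)) = (Bk * Bkᵀ * (Bstar * Bstarᵀ)) * B from by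
        simp only [Matrix.mul_assoc]]
      rw [hPbQ, Matrix.zero_mul, sub_zero]
    rw [Matrix.transpose_mul, Matrix.transpose_mul, hPtT, hQT]
    calc (Bᵀ * (1 - Bk * Bkᵀ)) * (1 - Bstar * Bstarᵀ)
          * ((1 - Bstar * Bstarᵀ) * ((1 - Bk * Bkᵀ) * B))
        = Bᵀ * ((1 - Bk * Bkᵀ) * (((1 - Bstar * Bstarᵀ) * (1 - Bstar * Bstarᵀ))
            * ((1 - Bk * Bkᵀ) * B))) := by simp only [Matrix.mul_assoc]
    _ = Bᵀ * ((1 - Bk * Bkᵀ) * ((1 - Bstar * Bstarᵀ) * ((1 - Bk * Bkᵀ) * B))) := by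
          rw [hQtQt]
    _ = Bᵀ * ((1 - Bk * Bkᵀ) * ((1 - Bk * Bkᵀ) * B))
          - Bᵀ * ((1 - Bk * Bkᵀ) * (Bstar * (Bstarᵀ * B))) := by
          rw [step1, Matrix.mul_sub, Matrix.mul_sub]
    _ = Bᵀ * ((1 - Bk * Bkᵀ) * B) - Bᵀ * (Bstar * (Bstarᵀ * B)) := by
          rw [step2,
            show (1 - Bk * Bkᵀ) * ((1 - Bk * Bkᵀ) * B)
              = ((1 - Bk * Bkᵀ) * (1 - Bk * Bkᵀ)) * B from by simp only [Matrix.mul_assoc],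
            hPtPt]
  -- decomposition of M
  have hDBB : Bᵀ * Dmat m k ε * B
      = ε • (Bᵀ * ((1 - Bk * Bkᵀ) * B)) + Bᵀ * (Bk * (Bkᵀ * B)) := by
    rw [show (Dmat m k ε : Matrix (Fin m ⊕ Fin k) (Fin m ⊕ Fin k) ℝ)
        = ε • (1 - Bk * Bkᵀ) + Bk * Bkᵀ from D_decomp hBk]
    simp only [Matrix.mul_add, Matrix.add_mul, Matrix.mul_smul, Matrix.smul_mul,
      Matrix.mul_assoc]
  -- key scalar computation
  have hεT : ε * (((Bᵀ * Dmat m k ε * B)⁻¹ * (Bᵀ * ((1 - Bk * Bkᵀ) * B))).trace)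
      = (k:ℝ) - ((Bᵀ * Dmat m k ε * B)⁻¹ * (Bᵀ * (Bk * (Bkᵀ * B)))).trace := by
    have h0 : ε • (Bᵀ * ((1 - Bk * Bkᵀ) * B))
        = Bᵀ * Dmat m k ε * B - Bᵀ * (Bk * (Bkᵀ * B)) := by
      rw [hDBB]; module
    calc ε * (((Bᵀ * Dmat m k ε * B)⁻¹ * (Bᵀ * ((1 - Bk * Bkᵀ) * B))).trace)
        = (((Bᵀ * Dmat m k ε * B)⁻¹ * (ε • (Bᵀ * ((1 - Bk * Bkᵀ) * B))))).trace := by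
          rw [Matrix.mul_smul, Matrix.trace_smul, smul_eq_mul]
    _ = (((Bᵀ * Dmat m k ε * B)⁻¹ * (Bᵀ * Dmat m k ε * B)).trace
          - ((Bᵀ * Dmat m k ε * B)⁻¹ * (Bᵀ * (Bk * (Bkᵀ * B)))).trace) := by
          rw [h0, Matrix.mul_sub, Matrix.trace_sub]
    _ = (k:ℝ) - ((Bᵀ * Dmat m k ε * B)⁻¹ * (Bᵀ * (Bk * (Bkᵀ * B)))).trace := by
          rw [hMinv, Matrix.trace_one]
          simp [Fintype.card_fin]
  -- put the RHS traces in canonical form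
  rw [hA1, hA2, hC1, hC2]
  rw [Matrix.mul_sub, Matrix.trace_sub]
  set y : ℝ := ((Bᵀ * Dmat m k ε * B)⁻¹ * (Bᵀ * (Bstar * (Bstarᵀ * B)))).trace
  set t : ℝ := ((Bᵀ * Dmat m k ε * B)⁻¹ * (Bᵀ * ((1 - Bk * Bkᵀ) * B))).trace
  set z : ℝ := ((Bᵀ * Dmat m k ε * B)⁻¹ * (Bᵀ * (Bk * (Bkᵀ * B)))).trace
  -- goal: (1/(2ε))*(ε k - ε ε y) + (k - z) = k/2 + (ε/2)*((t - y) + t)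
  have hεT' : ε * t = (k:ℝ) - z := hεT
  have hL : 1/(2*ε) * (ε * k - ε*ε * y) = (k:ℝ)/2 - ε/2 * y := by
    field_simp
  rw [hL]
  linarith [hεT']

end TraceFormula


/-- In the linear hard case with `Σ = diag(ε I_{d−k}, I_k)`, tasks
`θ = (1/√(2ε))B*w + δ` (`w`, `δ` uniform on unit spheres, `col B* ⊆ E*`,
`δ ∈ E_k`), the expected optimal frozen-representation risk is uniquely
minimized over `k`-dimensional subspaces `col(B)` by `col(B) = E_k`. -/
theorem frozenrep_learns_wrong_space {m k : ℕ} (hm : 0 < m) (hk : 0 < k)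
    (ε : ℝ) (hε : ε ∈ Set.Ioo (0 : ℝ) 1)
    (μw μδ : Measure (Fin k → ℝ))
    [IsProbabilityMeasure μw] [IsProbabilityMeasure μδ]
    -- `μw`, `μδ` are the uniform measures on the unit sphere: they are supported
    -- on the sphere and invariant under every orthogonal transformation
    (hwsph : ∀ᵐ w ∂μw, (∑ i, w i ^ 2) = 1)
    (hδsph : ∀ᵐ δc ∂μδ, (∑ i, δc i ^ 2) = 1)
    (hwrot : ∀ O : Matrix (Fin k) (Fin k) ℝ, Oᵀ * O = 1 →
      Measure.map O.mulVec μw = μw)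
    (hδrot : ∀ O : Matrix (Fin k) (Fin k) ℝ, Oᵀ * O = 1 →
      Measure.map O.mulVec μδ = μδ)
    (Bstar : Matrix (Fin m ⊕ Fin k) (Fin k) ℝ)
    (hBstar : Bstarᵀ * Bstar = 1)
    (hBstarE : ∀ (a : Fin k) (j : Fin k), Bstar (Sum.inr a) j = 0)
    (Bk : Matrix (Fin m ⊕ Fin k) (Fin k) ℝ)
    (hBk : Bk = Matrix.of fun i j =>
      Sum.elim (fun _ => (0 : ℝ)) (fun a => if a = j then (1 : ℝ) else 0) i) :
    ∀ B : Matrix (Fin m ⊕ Fin k) (Fin k) ℝ, Bᵀ * B = 1 →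
      frozenRisk ε μw μδ Bstar Bk ≤ frozenRisk ε μw μδ Bstar B ∧
      (frozenRisk ε μw μδ Bstar B = frozenRisk ε μw μδ Bstar Bk ↔
        ∀ (a : Fin m) (j : Fin k), B (Sum.inl a) j = 0) := by
  intro B hB
  have hkR : (0:ℝ) < k := by exact_mod_cast hk
  have hBkOrth : Bkᵀ * Bk = 1 := Bk_orthonormal hBk
  have hrB := frozenRisk_formula hε hwsph hδsph hwrot hδrot Bstar Bk hBk B hB
  have hrK := frozenRisk_formula hε hwsph hδsph hwrot hδrot Bstar Bk hBk Bk hBkOrth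
  have htB := trace_formula hε Bstar hBstar hBstarE Bk hBk B hB
  have htK := trace_formula hε Bstar hBstar hBstarE Bk hBk Bk hBkOrth
  have hMpdB : (Bᵀ * Dmat m k ε * B).PosDef := M_posDef hε B hB
  have hC2K : (1 - Bk * Bkᵀ) * Bk = 0 := by
    rw [Matrix.sub_mul, Matrix.one_mul, Matrix.mul_assoc, hBkOrth, Matrix.mul_one,
      sub_self]
  rw [hC2K] at htK
  simp only [Matrix.mul_zero, Matrix.transpose_zero, Matrix.zero_mul, Matrix.trace_zero,
    add_zero, mul_zero] at htK
  set T1 : ℝ := ((Bᵀ * Dmat m k ε * B)⁻¹ *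
      (((1 - Bstar * Bstarᵀ) * ((1 - Bk * Bkᵀ) * B))ᵀ *
        ((1 - Bstar * Bstarᵀ) * ((1 - Bk * Bkᵀ) * B)))).trace with hT1def
  set T2 : ℝ := ((Bᵀ * Dmat m k ε * B)⁻¹ *
      (((1 - Bk * Bkᵀ) * B)ᵀ * ((1 - Bk * Bkᵀ) * B))).trace with hT2def
  have hT1nn : 0 ≤ T1 := by
    rw [hT1def]; exact (trace_inv_quad _ hMpdB _).1
  have hT2nn : 0 ≤ T2 := by
    rw [hT2def]; exact (trace_inv_quad _ hMpdB _).1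
  have hRB : frozenRisk ε μw μδ Bstar B = ((k:ℝ)/2 + (ε/2) * (T1 + T2)) / k := by
    rw [hrB, htB]
  have hRK : frozenRisk ε μw μδ Bstar Bk = ((k:ℝ)/2) / k := by
    rw [hrK, htK]
  refine ⟨?_, ?_, ?_⟩
  · rw [hRB, hRK, div_le_div_iff₀ hkR hkR]
    have hval : 0 ≤ (ε/2) * (T1 + T2) * k :=
      mul_nonneg (mul_nonneg (by linarith [hε.1]) (by linarith)) hkR.le
    nlinarith [hval]
  · intro hEq
    rw [hRB, hRK] at hEq
    have h' := congrArg (fun x : ℝ => x * k) hEq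
    simp only [div_mul_cancel₀ _ hkR.ne'] at h'
    have hs : (ε/2) * (T1 + T2) = 0 := by linarith
    have hsum : T1 + T2 = 0 := by
      rcases mul_eq_zero.mp hs with h | h
      · exfalso; linarith [hε.1]
      · exact h
    have hT2 : T2 = 0 := by linarith
    have hC2B : (1 - Bk * Bkᵀ) * B = 0 := by
      refine (trace_inv_quad _ hMpdB _).2 ?_
      rw [← hT2def]; exact hT2
    have h'' : (Matrix.of fun i j =>
        Sum.elim (fun a => B (Sum.inl a) j) (fun _ => (0:ℝ)) i)
          = (0 : Matrix (Fin m ⊕ Fin k) (Fin k) ℝ) := by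
      rw [← Ptop_mul hBk B]; exact hC2B
    intro a j
    have := congrArg (fun X : Matrix (Fin m ⊕ Fin k) (Fin k) ℝ => X (Sum.inl a) j) h''
    simpa using this
  · intro hzero
    have hC2B : (1 - Bk * Bkᵀ) * B = 0 := by
      rw [Ptop_mul hBk B]
      ext i j
      cases i with
      | inl a => simp [hzero]
      | inr b => simp
    have hT2 : T2 = 0 := by
      rw [hT2def, hC2B]; simp
    have hT1 : T1 = 0 := by
      rw [hT1def, hC2B]; simp
    rw [hRB, hRK, hT1, hT2]
    norm_num
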